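/- arXiv:1404.6299 — 2 statements merged into one kernel-verified Lean document; each statement's English description precedes it below -/
import Mathlib

section
/- In a bipartite graph H with parts X and T, if there exists a matching M saturating B := N_H(A) within the induced subgraph H[A ∪ B] for some A ⊆ T with |B| < |A|, and if moreover deg_H(y) ≥ deg_H(x) for every edge xy with x ∈ X, y ∈ T, and every vertex of A has degree at least 1, then a contradiction arises; i.e., there is no nonempty A ⊆ T with |N_H(A)| < |A| under these hypotheses. -/
open SimpleGraph

namespace VizingTwoFactor

variable {V : Type*}

/-- The degree of a vertex, as the `ncard` of its neighbor set. -/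
noncomputable def ndeg (G : SimpleGraph V) (v : V) : ℕ :=
  (G.neighborSet v).ncard

/-- `G` is bipartite with parts `X` and `T`. -/
def IsBipartiteWith (G : SimpleGraph V) (X T : Set V) : Prop :=
  Disjoint X T ∧ ∀ u v : V, G.Adj u v → (u ∈ X ∧ v ∈ T) ∨ (u ∈ T ∧ v ∈ X)

/-- The set of neighbors of a set of vertices. -/
def NSet (G : SimpleGraph V) (A : Set V) : Set V :=
  {v | ∃ a ∈ A, G.Adj a v}

/-- `G` has a matching saturating the vertex set `T`. -/
def HasMatchingSaturating (G : SimpleGraph V) (T : Set V) : Prop :=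
  ∃ M : G.Subgraph, M.IsMatching ∧ T ⊆ M.verts

/-- Number of (ordered) adjacent pairs with first coordinate in `A` and second in `B`;
for disjoint `A`, `B` this is the number of edges between `A` and `B`. -/
noncomputable def eBetween (G : SimpleGraph V) (A B : Set V) : ℕ :=
  {p : V × V | p.1 ∈ A ∧ p.2 ∈ B ∧ G.Adj p.1 p.2}.ncard

/-- Number of neighbors of `v` inside `A`. -/
noncomputable def degIn (G : SimpleGraph V) (A : Set V) (v : V) : ℕ :=
  (G.neighborSet v ∩ A).ncard

/-- The vertex set (in `V`) of a connected component of an induced subgraph. -/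
def csupp (G : SimpleGraph V) (U : Set V) (C : (G.induce U).ConnectedComponent) : Set V :=
  Subtype.val '' C.supp

/-- The odd components of `G − (S ∪ T)` w.r.t. `(S,T)`: components sending an odd
number of edges to `T`. -/
noncomputable def oddComps (G : SimpleGraph V) (S T : Set V) :
    Set ((G.induce (S ∪ T)ᶜ).ConnectedComponent) :=
  {C | Odd (eBetween G (csupp G (S ∪ T)ᶜ C) T)}

/-- `h_G(S,T)`: the number of odd components. -/
noncomputable def hNum (G : SimpleGraph V) (S T : Set V) : ℕ :=
  (oddComps G S T).ncard

/-- `δ_G(S,T) = 2|S| + Σ_{v∈T} deg_{G−S}(v) − 2|T| − h_G(S,T)`. -/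
noncomputable def deltaST (G : SimpleGraph V) (S T : Set V) : ℤ :=
  2 * S.ncard + (∑ᶠ v ∈ T, (degIn G Sᶜ v : ℤ)) - 2 * T.ncard - hNum G S T

/-- A barrier. -/
def IsBarrier (G : SimpleGraph V) (S T : Set V) : Prop :=
  Disjoint S T ∧ deltaST G S T ≤ -2

/-- A minimum barrier: minimizes `|S ∪ T|` among barriers. -/
def IsMinBarrier (G : SimpleGraph V) (S T : Set V) : Prop :=
  IsBarrier G S T ∧ ∀ S' T' : Set V, IsBarrier G S' T' → (S ∪ T).ncard ≤ (S' ∪ T').ncard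

/-- `G` has a 2-factor: a spanning subgraph in which every vertex has degree 2. -/
def HasTwoFactor (G : SimpleGraph V) : Prop :=
  ∃ H : SimpleGraph V, H ≤ G ∧ ∀ v : V, ndeg H v = 2

/-- `G` has a proper edge coloring with `k` colors. -/
def HasEdgeColoring (G : SimpleGraph V) (k : ℕ) : Prop :=
  ∃ f : G.edgeSet → Fin k, ∀ e₁ e₂ : G.edgeSet, e₁ ≠ e₂ →
    (∃ v : V, v ∈ (e₁ : Sym2 V) ∧ v ∈ (e₂ : Sym2 V)) → f e₁ ≠ f e₂

/-- The chromatic index `χ'(G)`. -/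
noncomputable def chromIdx (G : SimpleGraph V) : ℕ :=
  sInf {k | HasEdgeColoring G k}

/-- `Δ` is the maximum degree of `G`. -/
def IsMaxDegree (G : SimpleGraph V) (Δ : ℕ) : Prop :=
  (∀ v : V, ndeg G v ≤ Δ) ∧ ∃ v : V, ndeg G v = Δ

/-- `G` is `Δ`-critical: no isolated vertices, maximum degree `Δ`, `χ'(G) = Δ + 1`, and
`χ'(G − e) = Δ` for every edge `e`. -/
def IsDeltaCritical (G : SimpleGraph V) (Δ : ℕ) : Prop :=
  (∀ v : V, ∃ u : V, G.Adj v u) ∧ IsMaxDegree G Δ ∧ chromIdx G = Δ + 1 ∧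
    ∀ e ∈ G.edgeSet, chromIdx (G.deleteEdges {e}) = Δ

/-- `T` is an independent set in `G`. -/
def IsIndep (G : SimpleGraph V) (T : Set V) : Prop :=
  ∀ u ∈ T, ∀ v ∈ T, ¬ G.Adj u v

/-- The bipartite graph `H*` consisting of the edges of `G` between `V(G) \ T` and `T`. -/
def betweenGraph (G : SimpleGraph V) (T : Set V) : SimpleGraph V where
  Adj u v := G.Adj u v ∧ ((u ∉ T ∧ v ∈ T) ∨ (u ∈ T ∧ v ∉ T))
  symm := ⟨fun u v h => ⟨h.1.symm, h.2.elim (fun h' => Or.inr ⟨h'.2, h'.1⟩)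
    (fun h' => Or.inl ⟨h'.2, h'.1⟩)⟩⟩
  loopless := ⟨fun u h => G.irrefl h.1⟩

theorem vizing_stmt_2 [Fintype V] (H : SimpleGraph V) (X T A : Set V)
    (hbip : IsBipartiteWith H X T)
    (hdeg : ∀ x ∈ X, ∀ y ∈ T, H.Adj x y → ndeg H x ≤ ndeg H y)
    (hA : A ⊆ T) (hne : A.Nonempty)
    (hmindeg : ∀ y ∈ A, ∃ x : V, H.Adj y x)
    (hcard : (NSet H A).ncard < A.ncard)
    (hM : HasMatchingSaturating (H.induce (A ∪ NSet H A)) (Subtype.val ⁻¹' NSet H A)) :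
    False := by
  classical
  set B : Set V := NSet H A with hB
  obtain ⟨hdisj, hedge⟩ := hbip
  -- B ⊆ X
  have hBX : B ⊆ X := by
    rintro x ⟨a, haA, hax⟩
    rcases hedge a x hax with ⟨haX, _⟩ | ⟨_, hxX⟩
    · exact absurd (hA haA) (Set.disjoint_left.mp hdisj haX)
    · exact hxX
  -- neighbors of vertices of A lie in B
  have hNB : ∀ y ∈ A, H.neighborSet y ⊆ B := by
    intro y hy v hv
    exact ⟨y, hy, hv⟩
  -- extract the matching partner function
  obtain ⟨M, hMm, hMs⟩ := hM
  have hex : ∀ x : V, x ∈ B → ∃ a : V, a ∈ A ∧ H.Adj x a ∧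
      ∃ (hx : x ∈ A ∪ B) (ha : a ∈ A ∪ B), M.Adj ⟨x, hx⟩ ⟨a, ha⟩ := by
    intro x hx
    have hxU : x ∈ A ∪ B := Or.inr hx
    have hxv : (⟨x, hxU⟩ : ↥(A ∪ B)) ∈ M.verts := hMs hx
    obtain ⟨w, hw, -⟩ := hMm hxv
    have hadj : H.Adj x w.val := M.adj_sub hw
    have hwA : w.val ∈ A := by
      have hwT : (w : V) ∈ T := by
        rcases hedge x w.val hadj with ⟨hxX, hwT⟩ | ⟨hxT, _⟩
        · exact hwT
        · exact absurd hxT (Set.disjoint_left.mp hdisj (hBX hx))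
      rcases w.property with h | h
      · exact h
      · exact absurd hwT (Set.disjoint_left.mp hdisj (hBX h))
    exact ⟨w.val, hwA, hadj, hxU, w.property, hw⟩
  choose f hfA hfadj hfM using hex
  -- injectivity of f on B
  have hinj : ∀ x₁ (h₁ : x₁ ∈ B), ∀ x₂ (h₂ : x₂ ∈ B), f x₁ h₁ = f x₂ h₂ → x₁ = x₂ := by
    intro x₁ h₁ x₂ h₂ hf
    obtain ⟨hx₁, ha₁, hM₁⟩ := hfM x₁ h₁
    obtain ⟨hx₂, ha₂, hM₂⟩ := hfM x₂ h₂
    have hweq : (⟨f x₁ h₁, ha₁⟩ : ↥(A ∪ B)) = ⟨f x₂ h₂, ha₂⟩ := Subtype.ext hf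
    have hM₂' : M.Adj ⟨x₂, hx₂⟩ ⟨f x₁ h₁, ha₁⟩ := hweq ▸ hM₂
    have hwv : (⟨f x₁ h₁, ha₁⟩ : ↥(A ∪ B)) ∈ M.verts := hM₁.symm.fst_mem
    obtain ⟨u, -, hu⟩ := hMm hwv
    have := (hu _ hM₁.symm).trans (hu _ hM₂'.symm).symm
    exact congrArg Subtype.val this
  -- finset setup
  set A' : Finset V := A.toFinset with hA'
  set B' : Finset V := B.toFinset with hB'
  -- degrees of vertices of A count edges into B
  have hdegA : ∀ y ∈ A', ndeg H y = (Finset.bipartiteAbove H.Adj B' y).card := by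
    intro y hy
    have hy' : y ∈ A := by simpa [hA'] using hy
    have : (H.neighborSet y).toFinset = Finset.bipartiteAbove H.Adj B' y := by
      ext v
      simp only [Set.mem_toFinset, Finset.bipartiteAbove, Finset.mem_filter, hB',
        SimpleGraph.mem_neighborSet]
      exact ⟨fun h => ⟨hNB y hy' h, h⟩, fun h => h.2⟩
    rw [ndeg, Set.ncard_eq_toFinset_card', this]
  have hdouble :
      ∑ y ∈ A', (Finset.bipartiteAbove H.Adj B' y).card =
        ∑ x ∈ B', (Finset.bipartiteBelow H.Adj A' x).card :=
    Finset.sum_card_bipartiteAbove_eq_sum_card_bipartiteBelow _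
  have hdegB : ∀ x ∈ B', (Finset.bipartiteBelow H.Adj A' x).card ≤ ndeg H x := by
    intro x hx
    rw [ndeg, Set.ncard_eq_toFinset_card']
    apply Finset.card_le_card
    intro a ha
    simp only [Finset.bipartiteBelow, Finset.mem_filter] at ha
    simp only [Set.mem_toFinset, SimpleGraph.mem_neighborSet]
    exact ha.2.symm
  -- define g : V → V extending f
  set g : V → V := fun x => if h : x ∈ B then f x h else x with hg
  have hgA : ∀ x ∈ B', g x ∈ A' := by
    intro x hx
    have hx' : x ∈ B := by simpa [hB'] using hx
    simp only [hg, dif_pos hx', hA', Set.mem_toFinset]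
    exact hfA x hx'
  have hginj : ∀ x₁ ∈ B', ∀ x₂ ∈ B', g x₁ = g x₂ → x₁ = x₂ := by
    intro x₁ h₁ x₂ h₂ h
    have h₁' : x₁ ∈ B := by simpa [hB'] using h₁
    have h₂' : x₂ ∈ B := by simpa [hB'] using h₂
    simp only [hg, dif_pos h₁', dif_pos h₂'] at h
    exact hinj x₁ h₁' x₂ h₂' h
  have hgdeg : ∀ x ∈ B', ndeg H x ≤ ndeg H (g x) := by
    intro x hx
    have hx' : x ∈ B := by simpa [hB'] using hx
    simp only [hg, dif_pos hx']
    exact hdeg x (hBX hx') (f x hx') (hA (hfA x hx')) (hfadj x hx')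
  -- sums
  have h1 : ∑ y ∈ A', ndeg H y ≤ ∑ x ∈ B', ndeg H x := by
    calc ∑ y ∈ A', ndeg H y = ∑ y ∈ A', (Finset.bipartiteAbove H.Adj B' y).card :=
          Finset.sum_congr rfl hdegA
      _ = ∑ x ∈ B', (Finset.bipartiteBelow H.Adj A' x).card := hdouble
      _ ≤ ∑ x ∈ B', ndeg H x := Finset.sum_le_sum hdegB
  have h2 : ∑ x ∈ B', ndeg H x ≤ ∑ y ∈ B'.image g, ndeg H y := by
    rw [Finset.sum_image hginj]
    exact Finset.sum_le_sum hgdeg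
  have himsub : B'.image g ⊆ A' := by
    intro y hy
    obtain ⟨x, hx, rfl⟩ := Finset.mem_image.mp hy
    exact hgA x hx
  have him_card : (B'.image g).card = B'.card := Finset.card_image_of_injOn hginj
  have hcard' : B'.card < A'.card := by
    rwa [hA', hB', ← Set.ncard_eq_toFinset_card', ← Set.ncard_eq_toFinset_card']
  have hsplit : ∑ y ∈ A' \ B'.image g, ndeg H y + ∑ y ∈ B'.image g, ndeg H y =
      ∑ y ∈ A', ndeg H y := Finset.sum_sdiff himsub
  have hposdeg : ∀ y ∈ A' \ B'.image g, 1 ≤ ndeg H y := by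
    intro y hy
    have hy' : y ∈ A := by
      have := (Finset.mem_sdiff.mp hy).1
      simpa [hA'] using this
    obtain ⟨x, hx⟩ := hmindeg y hy'
    rw [ndeg]
    have : (H.neighborSet y).Nonempty := ⟨x, hx⟩
    have := Set.ncard_pos (Set.toFinite _) |>.mpr this
    omega
  have hrest : 1 ≤ ∑ y ∈ A' \ B'.image g, ndeg H y := by
    have hne' : (A' \ B'.image g).Nonempty := by
      rw [← Finset.card_pos, Finset.card_sdiff_of_subset himsub]
      omega
    obtain ⟨y, hy⟩ := hne'
    calc 1 ≤ ndeg H y := hposdeg y hy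
      _ ≤ ∑ y ∈ A' \ B'.image g, ndeg H y := Finset.single_le_sum (fun _ _ => Nat.zero_le _) hy
  omega

end VizingTwoFactor
end

section
/- Let G be a Δ-critical graph and T ⊆ V(G) an independent set containing at most one vertex of degree Δ. Let H* be the bipartite graph with parts X' = V(G)\T and T whose edges are the edges of G between X' and T. Then H* has a matching saturating T. -/
open SimpleGraph

namespace VizingTwoFactor

variable {V : Type*}

section Aux

open Classical in
/-- A proper partial edge coloring of `G` with `Δ` colors, total on `G` minus the edge `xy`. -/
structure PC [Fintype V] (G : SimpleGraph V) (Δ : ℕ) (x y : V) where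
  c : V → V → Option (Fin Δ)
  symm : ∀ u v, c u v = c v u
  adj : ∀ u v k, c u v = some k → G.Adj u v
  proper : ∀ u v w k, c u v = some k → c u w = some k → v = w
  uncol : c x y = none
  total : ∀ u v, G.Adj u v → s(u,v) ≠ s(x,y) → c u v ≠ none

variable [Fintype V] {G : SimpleGraph V} {Δ : ℕ} {x y : V}

/-- color `k` is missing at `v`. -/
def Miss (φ : PC G Δ x y) (v : V) (k : Fin Δ) : Prop := ∀ u, φ.c v u ≠ some k

lemma sym2_eq_iff {a b u v : V} : s(u,v) = s(a,b) ↔ (u = a ∧ v = b) ∨ (u = b ∧ v = a) := by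
  rw [Sym2.eq_iff]

/-- From a total symmetric proper coloring function, get `HasEdgeColoring`. -/
lemma toHEC (c : V → V → Option (Fin Δ)) (hsymm : ∀ u v, c u v = c v u)
    (hproper : ∀ u v w k, c u v = some k → c u w = some k → v = w)
    (htotal : ∀ u v, G.Adj u v → c u v ≠ none) : HasEdgeColoring G Δ := by
  have hg : ∀ e : G.edgeSet, (Sym2.lift ⟨c, hsymm⟩ (e : Sym2 V)).isSome := by
    rintro ⟨e, he⟩
    induction e with
    | _ u v =>
      rw [SimpleGraph.mem_edgeSet] at he
      simpa [Option.isSome_iff_ne_none] using htotal u v he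
  refine ⟨fun e => (Sym2.lift ⟨c, hsymm⟩ (e : Sym2 V)).get (hg e), ?_⟩
  rintro ⟨e₁, he₁⟩ ⟨e₂, he₂⟩ hne ⟨v, hv1, hv2⟩ heq
  simp only at hv1 hv2 heq
  obtain ⟨a, ha⟩ : ∃ a, e₁ = s(v, a) := ⟨Sym2.Mem.other hv1, (Sym2.other_spec hv1).symm⟩
  obtain ⟨b, hb⟩ : ∃ b, e₂ = s(v, b) := ⟨Sym2.Mem.other hv2, (Sym2.other_spec hv2).symm⟩
  subst ha hb
  have h1 : c v a = some ((Sym2.lift ⟨c, hsymm⟩ (s(v,a))).get (hg ⟨s(v,a), he₁⟩)) := by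
    simp [Sym2.lift_mk]
  have h2 : c v b = some ((Sym2.lift ⟨c, hsymm⟩ (s(v,b))).get (hg ⟨s(v,b), he₂⟩)) := by
    simp [Sym2.lift_mk]
  rw [heq] at h1
  have : a = b := hproper v a b _ h1 h2
  subst this
  exact hne (Subtype.ext rfl)

/-- If a common color is missing at both `x` and `y`, extend to a `Δ`-edge-coloring of `G`. -/
lemma PC.extend (φ : PC G Δ x y) (hxy : G.Adj x y) (k : Fin Δ)
    (hkx : Miss φ x k) (hky : Miss φ y k) : HasEdgeColoring G Δ := by
  classical
  set c' : V → V → Option (Fin Δ) := fun u v => if s(u,v) = s(x,y) then some k else φ.c u v with hc'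
  refine toHEC c' ?_ ?_ ?_
  · intro u v
    simp only [hc']
    rw [Sym2.eq_swap (a := v), φ.symm u v]
  · intro u v w m h1 h2
    simp only [hc'] at h1 h2
    by_cases e1 : s(u,v) = s(x,y) <;> by_cases e2 : s(u,w) = s(x,y)
    · rw [if_pos e1] at h1; rw [if_pos e2] at h2
      rw [← e2] at e1; exact (Sym2.congr_right.mp e1)
    · rw [if_pos e1] at h1; rw [if_neg e2] at h2
      cases h1
      rcases sym2_eq_iff.mp e1 with ⟨hu, hv⟩ | ⟨hu, hv⟩
      · subst hu; exact absurd h2 (hkx w)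
      · subst hu; exact absurd h2 (hky w)
    · rw [if_neg e1] at h1; rw [if_pos e2] at h2
      cases h2
      rcases sym2_eq_iff.mp e2 with ⟨hu, hv⟩ | ⟨hu, hv⟩
      · subst hu; exact absurd h1 (hkx v)
      · subst hu; exact absurd h1 (hky v)
    · rw [if_neg e1] at h1; rw [if_neg e2] at h2
      exact φ.proper u v w m h1 h2
  · intro u v huv
    simp only [hc']
    by_cases e1 : s(u,v) = s(x,y)
    · rw [if_pos e1]; simp
    · rw [if_neg e1]; exact φ.total u v huv e1

lemma hec_of_chromIdx (H : SimpleGraph V) {k : ℕ} (hk : chromIdx H = k) : HasEdgeColoring H k := by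
  have hne : {m | HasEdgeColoring H m}.Nonempty := by
    haveI : Fintype H.edgeSet := Fintype.ofFinite _
    refine ⟨Fintype.card H.edgeSet, Fintype.equivFin H.edgeSet, ?_⟩
    intro e₁ e₂ hne _ h
    exact hne ((Fintype.equivFin H.edgeSet).injective h)
  have := Nat.sInf_mem hne
  rwa [show sInf {m | HasEdgeColoring H m} = k from hk] at this

lemma not_hec (hG : chromIdx G = Δ + 1) : ¬ HasEdgeColoring G Δ := by
  intro h
  have : chromIdx G ≤ Δ := Nat.sInf_le h
  omega

/-- Build an initial partial coloring from a `Δ`-coloring of `G - xy`. -/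
lemma exists_PC (hxy : G.Adj x y)
    (hde : HasEdgeColoring (G.deleteEdges {s(x,y)}) Δ) : Nonempty (PC G Δ x y) := by
  classical
  obtain ⟨f, hf⟩ := hde
  refine ⟨⟨fun u v => if h : (G.deleteEdges {s(x,y)}).Adj u v
      then some (f ⟨s(u,v), (SimpleGraph.mem_edgeSet _).mpr h⟩) else none, ?_, ?_, ?_, ?_, ?_⟩⟩
  · intro u v
    by_cases h : (G.deleteEdges {s(x,y)}).Adj u v
    · rw [dif_pos h, dif_pos h.symm]
      congr 1
      exact congrArg f (Subtype.ext (Sym2.eq_swap))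
    · rw [dif_neg h, dif_neg (fun hs => h hs.symm)]
  · intro u v k h
    by_cases hh : (G.deleteEdges {s(x,y)}).Adj u v
    · exact (SimpleGraph.deleteEdges_adj.mp hh).1
    · rw [dif_neg hh] at h; exact absurd h (by simp)
  · intro u v w k h1 h2
    by_cases hv : (G.deleteEdges {s(x,y)}).Adj u v
    · by_cases hw : (G.deleteEdges {s(x,y)}).Adj u w
      · rw [dif_pos hv] at h1; rw [dif_pos hw] at h2
        by_contra hne
        have hedne : (⟨s(u,v), (SimpleGraph.mem_edgeSet _).mpr hv⟩ : (G.deleteEdges {s(x,y)}).edgeSet)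
            ≠ ⟨s(u,w), (SimpleGraph.mem_edgeSet _).mpr hw⟩ := by
          intro hcon
          exact hne (Sym2.congr_right.mp (congrArg Subtype.val hcon))
        refine hf _ _ hedne ⟨u, ?_, ?_⟩ ?_
        · exact Sym2.mem_mk_left u v
        · exact Sym2.mem_mk_left u w
        · rw [Option.some_inj.mp h1, Option.some_inj.mp h2]
      · rw [dif_neg hw] at h2; exact absurd h2 (by simp)
    · rw [dif_neg hv] at h1; exact absurd h1 (by simp)
  · have : ¬ (G.deleteEdges {s(x,y)}).Adj x y := by
      rw [SimpleGraph.deleteEdges_adj]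
      simp
    rw [dif_neg this]
  · intro u v huv hs
    have : (G.deleteEdges {s(x,y)}).Adj u v := by
      rw [SimpleGraph.deleteEdges_adj]
      exact ⟨huv, by simpa using hs⟩
    rw [dif_pos this]
    simp
open scoped Classical

/-- Recolor the edge `x z` with color `k` missing at both `x` and `z`. -/
noncomputable def PC.recolor (φ : PC G Δ x y) (z : V) (hz : G.Adj x z) (hzy : z ≠ y)
    (k : Fin Δ) (hkx : Miss φ x k) (hkz : Miss φ z k) : PC G Δ x y where
  c u v := if s(u,v) = s(x,z) then some k else φ.c u v
  symm u v := by rw [Sym2.eq_swap (a := v), φ.symm u v]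
  adj u v m h := by
    by_cases e : s(u,v) = s(x,z)
    · rcases sym2_eq_iff.mp e with ⟨hu, hv⟩ | ⟨hu, hv⟩
      · subst hu hv; exact hz
      · subst hu hv; exact hz.symm
    · rw [if_neg e] at h; exact φ.adj u v m h
  proper u v w m h1 h2 := by
    by_cases e1 : s(u,v) = s(x,z) <;> by_cases e2 : s(u,w) = s(x,z)
    · rw [← e2] at e1; exact Sym2.congr_right.mp e1
    · rw [if_pos e1] at h1; rw [if_neg e2] at h2
      cases h1
      rcases sym2_eq_iff.mp e1 with ⟨hu, _⟩ | ⟨hu, _⟩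
      · subst hu; exact absurd h2 (hkx w)
      · subst hu; exact absurd h2 (hkz w)
    · rw [if_neg e1] at h1; rw [if_pos e2] at h2
      cases h2
      rcases sym2_eq_iff.mp e2 with ⟨hu, _⟩ | ⟨hu, _⟩
      · subst hu; exact absurd h1 (hkx v)
      · subst hu; exact absurd h1 (hkz v)
    · rw [if_neg e1] at h1; rw [if_neg e2] at h2
      exact φ.proper u v w m h1 h2
  uncol := by
    have : s(x,y) ≠ s(x,z) := fun h => hzy (Sym2.congr_right.mp h).symm
    rw [if_neg this, φ.uncol]
  total u v huv hs := by
    by_cases e : s(u,v) = s(x,z)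
    · rw [if_pos e]; simp
    · rw [if_neg e]; exact φ.total u v huv hs

lemma recolor_c {φ : PC G Δ x y} {z : V} {hz hzy k hkx hkz} (u v : V) :
    (φ.recolor z hz hzy k hkx hkz).c u v = if s(u,v) = s(x,z) then some k else φ.c u v := rfl

lemma recolor_c_x {φ : PC G Δ x y} {z : V} {hz hzy k hkx hkz} (v : V) (hv : v ≠ z) :
    (φ.recolor z hz hzy k hkx hkz).c x v = φ.c x v := by
  rw [recolor_c, if_neg (fun h => hv (Sym2.congr_right.mp h))]

lemma recolor_miss_other {φ : PC G Δ x y} {z : V} {hz hzy k hkx hkz} {w : V}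
    (hwx : w ≠ x) (hwz : w ≠ z) (m : Fin Δ) :
    Miss (φ.recolor z hz hzy k hkx hkz) w m ↔ Miss φ w m := by
  have he : ∀ u, s(w,u) ≠ s(x,z) := by
    intro u h
    rcases sym2_eq_iff.mp h with ⟨h1, _⟩ | ⟨h1, _⟩
    · exact hwx h1
    · exact hwz h1
  constructor <;> intro hm u <;> have := hm u
  · rwa [recolor_c, if_neg (he u)] at this
  · rwa [recolor_c, if_neg (he u)]

lemma recolor_miss_x {φ : PC G Δ x y} {z : V} {hz hzy k hkx hkz} {cc : Fin Δ}
    (hcc : φ.c x z = some cc) : Miss (φ.recolor z hz hzy k hkx hkz) x cc := by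
  intro u
  rw [recolor_c]
  by_cases e : s(x,u) = s(x,z)
  · rw [if_pos e]
    intro h
    cases h
    exact hkx z hcc
  · rw [if_neg e]
    intro h
    exact e (by rw [φ.proper x u z cc h hcc])

/-- The Kempe (α,β) graph. -/
def Kg (φ : PC G Δ x y) (α β : Fin Δ) : SimpleGraph V where
  Adj u v := φ.c u v = some α ∨ φ.c u v = some β
  symm := ⟨fun u v (h : φ.c u v = some α ∨ φ.c u v = some β) =>
    show φ.c v u = some α ∨ φ.c v u = some β by rwa [φ.symm v u]⟩
  loopless := ⟨fun u (h : φ.c u u = some α ∨ φ.c u u = some β) => by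
    rcases h with h | h <;> exact G.irrefl (φ.adj u u _ h)⟩

lemma kg_adj {φ : PC G Δ x y} {α β : Fin Δ} {u v : V} :
    (Kg φ α β).Adj u v ↔ (φ.c u v = some α ∨ φ.c u v = some β) := Iff.rfl

/-- Swap colors α and β on the Kempe component of `z`. -/
noncomputable def PC.swap (φ : PC G Δ x y) (α β : Fin Δ) (hab : α ≠ β) (z : V) : PC G Δ x y where
  c u v := if (Kg φ α β).Reachable z u then
      (if φ.c u v = some α then some β else if φ.c u v = some β then some α else φ.c u v)
    else φ.c u v
  symm u v := by
    by_cases hu : (Kg φ α β).Reachable z u <;> by_cases hv : (Kg φ α β).Reachable z v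
    · rw [if_pos hu, if_pos hv, φ.symm u v]
    · have : ¬ (φ.c u v = some α ∨ φ.c u v = some β) := fun h => hv (hu.trans ⟨.cons h .nil⟩)
      push_neg at this
      rw [if_pos hu, if_neg hv, if_neg this.1, if_neg this.2, φ.symm u v]
    · have : ¬ (φ.c u v = some α ∨ φ.c u v = some β) := fun h =>
        hu (hv.trans ⟨.cons (((Kg φ α β).adj_symm h : (Kg φ α β).Adj v u)) .nil⟩)
      push_neg at this
      rw [if_neg hu, if_pos hv, φ.symm u v]
      rw [φ.symm u v] at this
      rw [if_neg this.1, if_neg this.2]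
    · rw [if_neg hu, if_neg hv, φ.symm u v]
  adj u v m h := by
    by_cases hu : (Kg φ α β).Reachable z u
    · rw [if_pos hu] at h
      by_cases h1 : φ.c u v = some α
      · exact φ.adj u v α h1
      · rw [if_neg h1] at h
        by_cases h2 : φ.c u v = some β
        · exact φ.adj u v β h2
        · rw [if_neg h2] at h; exact φ.adj u v m h
    · rw [if_neg hu] at h; exact φ.adj u v m h
  proper u v w m h1 h2 := by
    by_cases hu : (Kg φ α β).Reachable z u
    · rw [if_pos hu] at h1 h2
      by_cases hma : m = α
      · have key : ∀ t, (if φ.c u t = some α then some β else if φ.c u t = some β then some α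
            else φ.c u t) = some m → φ.c u t = some β := by
          intro t ht
          rw [hma] at ht
          by_cases e1 : φ.c u t = some α
          · rw [if_pos e1] at ht; exact absurd (Option.some_inj.mp ht).symm hab
          · rw [if_neg e1] at ht
            by_cases e2 : φ.c u t = some β
            · exact e2
            · rw [if_neg e2] at ht; exact absurd ht e1
        exact φ.proper u v w β (key v h1) (key w h2)
      · by_cases hmb : m = β
        · have key : ∀ t, (if φ.c u t = some α then some β else if φ.c u t = some β then some α
              else φ.c u t) = some m → φ.c u t = some α := by
            intro t ht
            rw [hmb] at ht
            by_cases e1 : φ.c u t = some α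
            · exact e1
            · rw [if_neg e1] at ht
              by_cases e2 : φ.c u t = some β
              · rw [if_pos e2] at ht; exact absurd (Option.some_inj.mp ht) hab
              · rw [if_neg e2] at ht; exact absurd ht e2
          exact φ.proper u v w α (key v h1) (key w h2)
        · have key : ∀ t, (if φ.c u t = some α then some β else if φ.c u t = some β then some α
              else φ.c u t) = some m → φ.c u t = some m := by
            intro t ht
            by_cases e1 : φ.c u t = some α
            · rw [if_pos e1] at ht; exact absurd (Option.some_inj.mp ht).symm hmb
            · rw [if_neg e1] at ht
              by_cases e2 : φ.c u t = some β
              · rw [if_pos e2] at ht; exact absurd (Option.some_inj.mp ht).symm hma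
              · rwa [if_neg e2] at ht
          exact φ.proper u v w m (key v h1) (key w h2)
    · rw [if_neg hu] at h1 h2; exact φ.proper u v w m h1 h2
  uncol := by
    by_cases hu : (Kg φ α β).Reachable z x
    · rw [if_pos hu, φ.uncol]
      simp
    · rw [if_neg hu, φ.uncol]
  total u v huv hs := by
    have := φ.total u v huv hs
    by_cases hu : (Kg φ α β).Reachable z u
    · rw [if_pos hu]
      by_cases e1 : φ.c u v = some α
      · rw [if_pos e1]; simp
      · rw [if_neg e1]
        by_cases e2 : φ.c u v = some β
        · rw [if_pos e2]; simp
        · rwa [if_neg e2]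
    · rwa [if_neg hu]

lemma swap_c_of_not_reach {φ : PC G Δ x y} {α β : Fin Δ} {hab : α ≠ β} {z u : V}
    (hu : ¬ (Kg φ α β).Reachable z u) (v : V) : (φ.swap α β hab z).c u v = φ.c u v := by
  show (if (Kg φ α β).Reachable z u then
      (if φ.c u v = some α then some β else if φ.c u v = some β then some α else φ.c u v)
    else φ.c u v) = φ.c u v
  rw [if_neg hu]

lemma swap_miss_of_not_reach {φ : PC G Δ x y} {α β : Fin Δ} {hab : α ≠ β} {z u : V}
    (hu : ¬ (Kg φ α β).Reachable z u) (m : Fin Δ) :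
    Miss (φ.swap α β hab z) u m ↔ Miss φ u m := by
  constructor <;> intro hm v <;> have := hm v
  · rwa [swap_c_of_not_reach hu] at this
  · rwa [swap_c_of_not_reach hu]

lemma swap_c_of_reach {φ : PC G Δ x y} {α β : Fin Δ} {hab : α ≠ β} {z u : V}
    (hu : (Kg φ α β).Reachable z u) (v : V) : (φ.swap α β hab z).c u v =
      (if φ.c u v = some α then some β else if φ.c u v = some β then some α else φ.c u v) := by
  show (if (Kg φ α β).Reachable z u then
      (if φ.c u v = some α then some β else if φ.c u v = some β then some α else φ.c u v)
    else φ.c u v) = _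
  rw [if_pos hu]

lemma swap_miss_beta {φ : PC G Δ x y} {α β : Fin Δ} {hab : α ≠ β} {z u : V}
    (hu : (Kg φ α β).Reachable z u) :
    Miss (φ.swap α β hab z) u β ↔ Miss φ u α := by
  constructor <;> intro hm v <;> have := hm v
  · rw [swap_c_of_reach hu] at this
    intro h
    rw [if_pos h] at this
    exact this rfl
  · rw [swap_c_of_reach hu]
    by_cases e1 : φ.c u v = some α
    · exact absurd e1 (hm v)
    · rw [if_neg e1]
      by_cases e2 : φ.c u v = some β
      · rw [if_pos e2]; exact fun h => hab (Option.some_inj.mp h)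
      · rw [if_neg e2]; exact e2
noncomputable def MissF (φ : PC G Δ x y) (v : V) : Finset (Fin Δ) :=
  Finset.univ.filter (fun k => Miss φ v k)

lemma mem_missF {φ : PC G Δ x y} {v : V} {k : Fin Δ} : k ∈ MissF φ v ↔ Miss φ v k := by
  simp [MissF]

lemma not_miss_iff {φ : PC G Δ x y} {v : V} {k : Fin Δ} :
    ¬ Miss φ v k ↔ ∃ u, φ.c v u = some k := by
  unfold Miss
  push_neg
  rfl

lemma pres_card_le (φ : PC G Δ x y) (v : V) (F : Finset V)
    (hF : ∀ u k, φ.c v u = some k → u ∈ F) :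
    (Finset.univ.filter (fun k => ¬ Miss φ v k)).card ≤ F.card := by
  classical
  set g : Fin Δ → V := fun k =>
    if h : ∃ u, φ.c v u = some k then Classical.choose h else v with hg
  have hspec : ∀ k ∈ Finset.univ.filter (fun k => ¬ Miss φ v k), φ.c v (g k) = some k := by
    intro k hk
    rw [Finset.mem_filter] at hk
    obtain h := not_miss_iff.mp hk.2
    rw [hg]
    simp only [dif_pos h]
    exact Classical.choose_spec h
  apply Finset.card_le_card_of_injOn g
  · intro k hk
    exact hF _ _ (hspec k hk)
  · intro k hk k' hk' he
    have h1 := hspec k hk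
    have h2 := hspec k' hk'
    rw [he] at h1
    exact Option.some_inj.mp (h1.symm.trans h2)

lemma missF_card (φ : PC G Δ x y) (v : V) [DecidableRel G.Adj] :
    Δ ≤ (G.neighborFinset v).card + (MissF φ v).card := by
  classical
  have hsplit := Finset.card_filter_add_card_filter_not
    (s := (Finset.univ : Finset (Fin Δ))) (p := fun k => Miss φ v k)
  have hle := pres_card_le φ v (G.neighborFinset v)
    (fun u k h => (SimpleGraph.mem_neighborFinset _ _ _).mpr (φ.adj v u k h))
  have hM : (Finset.univ.filter (fun k => Miss φ v k)).card = (MissF φ v).card := by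
    unfold MissF; congr 1
  have : (Finset.univ : Finset (Fin Δ)).card = Δ := by simp
  omega

lemma missF_card_end (φ : PC G Δ x y) {a b : V} (hab : G.Adj a b) (hnone : φ.c a b = none)
    [DecidableRel G.Adj] : Δ + 1 ≤ (G.neighborFinset a).card + (MissF φ a).card := by
  classical
  have hsplit := Finset.card_filter_add_card_filter_not
    (s := (Finset.univ : Finset (Fin Δ))) (p := fun k => Miss φ a k)
  have hle := pres_card_le φ a ((G.neighborFinset a).erase b) ?_
  · have hM : (Finset.univ.filter (fun k => Miss φ a k)).card = (MissF φ a).card := by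
      unfold MissF; congr 1
    have hcard : ((G.neighborFinset a).erase b).card = (G.neighborFinset a).card - 1 :=
      Finset.card_erase_of_mem ((SimpleGraph.mem_neighborFinset _ _ _).mpr hab)
    have hpos : 0 < (G.neighborFinset a).card :=
      Finset.card_pos.mpr ⟨b, (SimpleGraph.mem_neighborFinset _ _ _).mpr hab⟩
    have : (Finset.univ : Finset (Fin Δ)).card = Δ := by simp
    omega
  · intro u k h
    rw [Finset.mem_erase]
    refine ⟨?_, (SimpleGraph.mem_neighborFinset _ _ _).mpr (φ.adj a u k h)⟩
    intro he
    rw [he, hnone] at h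
    cases h

lemma exists_miss_x (φ : PC G Δ x y) (hxy : G.Adj x y) [DecidableRel G.Adj]
    (hmax : (G.neighborFinset x).card ≤ Δ) : ∃ k, Miss φ x k := by
  have := missF_card_end φ hxy φ.uncol
  have : (MissF φ x).Nonempty := Finset.card_pos.mp (by omega)
  obtain ⟨k, hk⟩ := this
  exact ⟨k, mem_missF.mp hk⟩

lemma kg_filter_card {φ : PC G Δ x y} {γ : Fin Δ} (v : V) :
    (Finset.univ.filter (fun u => φ.c v u = some γ)).card ≤ 1 := by
  classical
  rw [Finset.card_le_one]
  intro a ha b hb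
  rw [Finset.mem_filter] at ha hb
  exact φ.proper v a b γ ha.2 hb.2

lemma kg_deg_le_two (φ : PC G Δ x y) (α β : Fin Δ) (v : V)
    [DecidableRel (Kg φ α β).Adj] : ((Kg φ α β).neighborFinset v).card ≤ 2 := by
  classical
  have hsub : (Kg φ α β).neighborFinset v ⊆
      (Finset.univ.filter (fun u => φ.c v u = some α)) ∪
      (Finset.univ.filter (fun u => φ.c v u = some β)) := by
    intro u hu
    rw [SimpleGraph.mem_neighborFinset] at hu
    rcases hu with h | h
    · exact Finset.mem_union_left _ (by simp [h])
    · exact Finset.mem_union_right _ (by simp [h])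
  calc ((Kg φ α β).neighborFinset v).card ≤ _ := Finset.card_le_card hsub
    _ ≤ _ + _ := Finset.card_union_le _ _
    _ ≤ 2 := by
        have := kg_filter_card (φ := φ) (γ := α) v
        have := kg_filter_card (φ := φ) (γ := β) v
        omega

lemma kg_deg_le_one (φ : PC G Δ x y) (α β : Fin Δ) (v : V) (hm : Miss φ v α)
    [DecidableRel (Kg φ α β).Adj] : ((Kg φ α β).neighborFinset v).card ≤ 1 := by
  classical
  have hsub : (Kg φ α β).neighborFinset v ⊆
      (Finset.univ.filter (fun u => φ.c v u = some β)) := by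
    intro u hu
    rw [SimpleGraph.mem_neighborFinset] at hu
    rcases hu with h | h
    · exact absurd h (hm u)
    · simp [h]
  exact le_trans (Finset.card_le_card hsub) (kg_filter_card v)

section Paths

variable {H : SimpleGraph V}

lemma path_nbrs {b c : V} (P : H.Walk b c) (hP : P.IsPath) :
    ∀ u ∈ P.support, u ≠ c →
    ∃ w, H.Adj u w ∧ w ∈ P.support ∧ (u ≠ b → ∃ w', H.Adj u w' ∧ w' ∈ P.support ∧ w ≠ w') := by
  induction P with
  | nil =>
    intro u hu huc
    rw [SimpleGraph.Walk.support_nil, List.mem_singleton] at hu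
    exact absurd hu huc
  | @cons b v c h Q ih =>
    intro u hu huc
    rw [SimpleGraph.Walk.support_cons, List.mem_cons] at hu
    rw [SimpleGraph.Walk.cons_isPath_iff] at hP
    rcases hu with rfl | hu
    · exact ⟨v, h, by simp [SimpleGraph.Walk.support_cons, Q.start_mem_support],
        fun hub => absurd rfl hub⟩
    · obtain ⟨w, hw1, hw2, hcond⟩ := ih hP.1 u hu huc
      refine ⟨w, hw1, by simp [SimpleGraph.Walk.support_cons, hw2], ?_⟩
      intro _
      by_cases huv : u = v
      · subst huv
        refine ⟨b, h.symm, by simp [SimpleGraph.Walk.support_cons], ?_⟩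
        intro hwb
        rw [hwb] at hw2
        exact hP.2 hw2
      · obtain ⟨w', hw'1, hw'2, hww'⟩ := hcond huv
        exact ⟨w', hw'1, by simp [SimpleGraph.Walk.support_cons, hw'2], hww'⟩

lemma walk_closed {L : List V} (hcl : ∀ u ∈ L, ∀ v, H.Adj u v → v ∈ L) :
    ∀ {a v : V} (_ : H.Walk a v), a ∈ L → v ∈ L := by
  intro a v W
  induction W with
  | nil => exact id
  | cons h W ih => intro ha; exact ih (hcl _ ha _ h)

lemma closure [DecidableRel H.Adj] {b c : V} (P : H.Walk b c) (hP : P.IsPath) (hbc : b ≠ c)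
    (hdeg : ∀ v, (H.neighborFinset v).card ≤ 2)
    (hdb : (H.neighborFinset b).card ≤ 1) (hdc : (H.neighborFinset c).card ≤ 1) :
    ∀ u ∈ P.support, ∀ v, H.Adj u v → v ∈ P.support := by
  intro u hu v huv
  by_cases huc : u = c
  · subst huc
    have hu' : u ∈ P.reverse.support := by
      rwa [SimpleGraph.Walk.support_reverse, List.mem_reverse]
    obtain ⟨w, hw1, hw2, -⟩ := path_nbrs P.reverse hP.reverse u hu' (Ne.symm hbc)
    have hvw : v = w := Finset.card_le_one.mp hdc v
      ((SimpleGraph.mem_neighborFinset _ _ _).mpr huv) w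
      ((SimpleGraph.mem_neighborFinset _ _ _).mpr hw1)
    rw [hvw]
    rwa [SimpleGraph.Walk.support_reverse, List.mem_reverse] at hw2
  · obtain ⟨w, hw1, hw2, hcond⟩ := path_nbrs P hP u hu huc
    by_cases hub : u = b
    · subst hub
      have hvw : v = w := Finset.card_le_one.mp hdb v
        ((SimpleGraph.mem_neighborFinset _ _ _).mpr huv) w
        ((SimpleGraph.mem_neighborFinset _ _ _).mpr hw1)
      rwa [hvw]
    · obtain ⟨w', hw'1, hw'2, hww'⟩ := hcond hub
      by_cases hvw : v = w
      · rwa [hvw]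
      by_cases hvw' : v = w'
      · rwa [hvw']
      exfalso
      have hsub : ({v, w, w'} : Finset V) ⊆ H.neighborFinset u := by
        intro a ha
        simp only [Finset.mem_insert, Finset.mem_singleton] at ha
        rcases ha with rfl | rfl | rfl <;>
          exact (SimpleGraph.mem_neighborFinset _ _ _).mpr ‹_›
      have hcard : ({v, w, w'} : Finset V).card = 3 := by
        rw [Finset.card_insert_of_notMem (by simp [hvw, hvw']),
          Finset.card_insert_of_notMem (by simp [hww']), Finset.card_singleton]
      have := Finset.card_le_card hsub
      have := hdeg u
      omega

lemma threeEndpoint [DecidableRel H.Adj] (hdeg : ∀ v, (H.neighborFinset v).card ≤ 2)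
    {a b c : V} (hda : (H.neighborFinset a).card ≤ 1) (hdb : (H.neighborFinset b).card ≤ 1)
    (hdc : (H.neighborFinset c).card ≤ 1)
    (hab : a ≠ b) (hac : a ≠ c) (hbc : b ≠ c)
    (h1 : H.Reachable b a) (h2 : H.Reachable b c) : False := by
  obtain ⟨W2⟩ := h2
  have hP := W2.toPath
  set P := W2.toPath.val with hPdef
  have hPpath : P.IsPath := W2.toPath.prop
  have hcl := closure P hPpath hbc hdeg hdb hdc
  obtain ⟨W1⟩ := h1
  have ha : a ∈ P.support := walk_closed hcl W1 P.start_mem_support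
  obtain ⟨w, hw1, -, hcond⟩ := path_nbrs P hPpath a ha hac
  obtain ⟨w', hw'1, -, hww'⟩ := hcond hab
  have h1 : w ∈ H.neighborFinset a := (SimpleGraph.mem_neighborFinset _ _ _).mpr hw1
  have h2 : w' ∈ H.neighborFinset a := (SimpleGraph.mem_neighborFinset _ _ _).mpr hw'1
  exact hww' (Finset.card_le_one.mp hda w h1 w' h2)

end Paths
lemma swap_miss_gamma {φ : PC G Δ x y} {α β : Fin Δ} {hab : α ≠ β} {z u : V} (γ : Fin Δ)
    (hga : γ ≠ α) (hgb : γ ≠ β) : Miss (φ.swap α β hab z) u γ ↔ Miss φ u γ := by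
  by_cases hu : (Kg φ α β).Reachable z u
  · constructor <;> intro hm v <;> have := hm v
    · rw [swap_c_of_reach hu] at this
      intro h
      rw [h] at this
      by_cases e1 : (some γ : Option (Fin Δ)) = some α
      · exact hga (Option.some_inj.mp e1)
      · rw [if_neg e1] at this
        by_cases e2 : (some γ : Option (Fin Δ)) = some β
        · exact hgb (Option.some_inj.mp e2)
        · rw [if_neg e2] at this; exact this rfl
    · rw [swap_c_of_reach hu]
      by_cases e1 : φ.c u v = some α
      · rw [if_pos e1]; exact fun h => hgb (Option.some_inj.mp h).symm
      · rw [if_neg e1]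
        by_cases e2 : φ.c u v = some β
        · rw [if_pos e2]; exact fun h => hga (Option.some_inj.mp h).symm
        · rw [if_neg e2]; exact this
  · exact swap_miss_of_not_reach hu γ

lemma kg_deg_le_one' (φ : PC G Δ x y) (α β : Fin Δ) (v : V) (hm : Miss φ v β)
    [DecidableRel (Kg φ α β).Adj] : ((Kg φ α β).neighborFinset v).card ≤ 1 := by
  classical
  have hsub : (Kg φ α β).neighborFinset v ⊆
      (Finset.univ.filter (fun u => φ.c v u = some α)) := by
    intro u hu
    rw [SimpleGraph.mem_neighborFinset] at hu
    rcases hu with h | h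
    · simp [h]
    · exact absurd h (hm u)
  exact le_trans (Finset.card_le_card hsub) (kg_filter_card v)

/-- A multifan at `x` with respect to the uncolored edge `xy`. -/
def IsMF (φ : PC G Δ x y) (F : ℕ → V) (p : ℕ) : Prop :=
  F 0 = y ∧ (∀ t ≤ p, G.Adj x (F t)) ∧ (∀ s ≤ p, ∀ t ≤ p, F s = F t → s = t) ∧
  (∀ t, 1 ≤ t → t ≤ p → ∃ s < t, ∃ cc, φ.c x (F t) = some cc ∧ Miss φ (F s) cc)

/-- Shift lemma: a color missing at `x` and at a multifan vertex yields a contradiction. -/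
lemma lemA (hnc : ¬ HasEdgeColoring G Δ) (hxy : G.Adj x y) :
    ∀ i (φ : PC G Δ x y) (F : ℕ → V) (p : ℕ), IsMF φ F p → i ≤ p →
    ∀ k, Miss φ x k → Miss φ (F i) k → False := by
  intro i
  induction i using Nat.strong_induction_on with
  | _ i ih =>
    intro φ F p hmf hip k hkx hki
    rcases Nat.eq_zero_or_pos i with rfl | hi
    · rw [hmf.1] at hki
      exact hnc (φ.extend hxy k hkx hki)
    · obtain ⟨s, hs, cc, hcc, hmiss⟩ := hmf.2.2.2 i hi hip
      have hFiy : F i ≠ y := by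
        intro h
        rw [← hmf.1] at h
        exact hi.ne' (hmf.2.2.1 i hip 0 (Nat.zero_le _) h)
      have hadji : G.Adj x (F i) := hmf.2.1 i hip
      have hFsx : F s ≠ x := (hmf.2.1 s (le_of_lt (lt_of_lt_of_le hs hip))).ne'
      have hFsi : F s ≠ F i := fun h =>
        hs.ne (hmf.2.2.1 s (le_of_lt (lt_of_lt_of_le hs hip)) i hip h)
      set φ' := φ.recolor (F i) hadji hFiy k hkx hki with hφ'
      have hm1 : Miss φ' x cc := recolor_miss_x hcc
      have hm2 : Miss φ' (F s) cc := (recolor_miss_other hFsx hFsi cc).mpr hmiss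
      have hmf' : IsMF φ' F (i - 1) := by
        refine ⟨hmf.1, fun t ht => hmf.2.1 t (by omega),
          fun s' hs' t ht => hmf.2.2.1 s' (by omega) t (by omega), ?_⟩
        intro t h1t hti
        obtain ⟨s', hs', cc', hcc', hmiss'⟩ := hmf.2.2.2 t h1t (by omega)
        have hFt_ne : F t ≠ F i := fun h => by
          have := hmf.2.2.1 t (by omega) i hip h
          omega
        have hFs'x : F s' ≠ x := (hmf.2.1 s' (by omega)).ne'
        have hFs'i : F s' ≠ F i := fun h => by
          have := hmf.2.2.1 s' (by omega) i hip h
          omega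
        refine ⟨s', hs', cc', ?_, ?_⟩
        · rw [hφ', recolor_c_x _ hFt_ne]; exact hcc'
        · rw [hφ', recolor_miss_other hFs'x hFs'i]; exact hmiss'
      exact ih s hs φ' F (i - 1) hmf' (by omega) cc hm1 hm2

lemma lemBcore (hnc : ¬ HasEdgeColoring G Δ) (hxy : G.Adj x y) :
    ∀ h (φ : PC G Δ x y) (F : ℕ → V) (p : ℕ), IsMF φ F p → h ≤ p →
    ∀ α β, Miss φ (F h) α → Miss φ x β → ¬ (Kg φ α β).Reachable x (F h) → False := by
  intro h
  induction h using Nat.strong_induction_on with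
  | _ h ih =>
    intro φ F p hmf hhp α β hα hβ hreach
    by_cases hab : α = β
    · exact lemA hnc hxy h φ F p hmf hhp α (by rw [hab]; exact hβ) hα
    by_cases hbh : Miss φ (F h) β
    · exact lemA hnc hxy h φ F p hmf hhp β hβ hbh
    have hxnr : ¬ (Kg φ α β).Reachable (F h) x := fun hr => hreach hr.symm
    have hnr : ∀ u, (Kg φ α β).Reachable (F h) u → (Kg φ α β).Reachable x u → False :=
      fun u h1 h2 => hreach (h2.trans h1.symm)
    set φ' := φ.swap α β hab (F h) with hφ'
    have hβ' : Miss φ' x β := (swap_miss_of_not_reach hxnr β).mpr hβ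
    have hFh' : Miss φ' (F h) β := (swap_miss_beta (SimpleGraph.Reachable.refl _)).mpr hα
    have hmf' : IsMF φ' F h := by
      refine ⟨hmf.1, fun t ht => hmf.2.1 t (by omega),
        fun s' hs' t ht => hmf.2.2.1 s' (by omega) t (by omega), ?_⟩
      intro t h1t hth
      obtain ⟨s', hs', cc', hcc', hmiss'⟩ := hmf.2.2.2 t h1t (by omega)
      have hcx : φ'.c x (F t) = φ.c x (F t) := swap_c_of_not_reach hxnr _
      by_cases hcb : cc' = β
      · rw [hcb] at hcc'
        exact absurd hcc' (hβ (F t))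
      by_cases hca : cc' = α
      · by_cases hr : (Kg φ α β).Reachable x (F s')
        · have hs'nr : ¬ (Kg φ α β).Reachable (F h) (F s') := fun hr2 => hnr _ hr2 hr
          exact ⟨s', hs', cc', by rw [hcx]; exact hcc',
            (swap_miss_of_not_reach hs'nr cc').mpr hmiss'⟩
        · rw [hca] at hmiss'
          exact (ih s' (lt_of_lt_of_le hs' hth) φ F p hmf (by omega) α β hmiss' hβ hr).elim
      · exact ⟨s', hs', cc', by rw [hcx]; exact hcc',
          (swap_miss_gamma cc' hca hcb).mpr hmiss'⟩
    exact lemA hnc hxy h φ' F h hmf' le_rfl β hβ' hFh'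

lemma lemB (hnc : ¬ HasEdgeColoring G Δ) (hxy : G.Adj x y)
    [DecidableRel G.Adj] (hmaxx : (G.neighborFinset x).card ≤ Δ)
    (φ : PC G Δ x y) (F : ℕ → V) (p : ℕ) (hmf : IsMF φ F p) :
    ∀ i, i ≤ p → ∀ j, j ≤ p → i ≠ j → ∀ α, Miss φ (F i) α → Miss φ (F j) α → False := by
  intro i hip j hjp hij α hi hj
  obtain ⟨β, hβ⟩ := exists_miss_x φ hxy hmaxx
  by_cases hab : α = β
  · exact lemA hnc hxy i φ F p hmf hip α (by rw [hab]; exact hβ) hi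
  by_cases hri : (Kg φ α β).Reachable x (F i)
  · by_cases hrj : (Kg φ α β).Reachable x (F j)
    · classical
      refine threeEndpoint (H := Kg φ α β) (fun v => kg_deg_le_two φ α β v)
        (a := x) (b := F i) (c := F j) (kg_deg_le_one' φ α β x hβ)
        (kg_deg_le_one φ α β (F i) hi) (kg_deg_le_one φ α β (F j) hj)
        ?_ ?_ ?_ hri.symm (hri.symm.trans hrj)
      · exact (hmf.2.1 i hip).ne
      · exact (hmf.2.1 j hjp).ne
      · intro h
        exact hij (hmf.2.2.1 i hip j hjp h)
    · exact lemBcore hnc hxy j φ F p hmf hjp α β hj hβ hrj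
  · exact lemBcore hnc hxy i φ F p hmf hip α β hi hβ hri
/-- Vizing's Adjacency Lemma. -/
lemma VAL [DecidableRel G.Adj] (hnc : ¬ HasEdgeColoring G Δ)
    (hde : HasEdgeColoring (G.deleteEdges {s(x,y)}) Δ)
    (hmax : ∀ v, (G.neighborFinset v).card ≤ Δ) (hxy : G.Adj x y) :
    Δ + 1 ≤ (G.neighborFinset y).card +
      (Finset.univ.filter (fun z => G.Adj x z ∧ z ≠ y ∧ (G.neighborFinset z).card = Δ)).card := by
  classical
  obtain ⟨φ⟩ := exists_PC hxy hde
  have hΔ : 0 < Δ := by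
    have h1 : y ∈ G.neighborFinset x := (SimpleGraph.mem_neighborFinset _ _ _).mpr hxy
    have := hmax x
    have := Finset.card_pos.mpr ⟨y, h1⟩
    omega
  set P : ℕ → Prop := fun p => ∃ F, IsMF φ F p with hP
  have h0 : P 0 := by
    refine ⟨fun _ => y, rfl, fun t _ => hxy, fun s hs t ht _ => by omega, fun t h1 h2 => by omega⟩
  have hbound : ∀ q, P q → q < Fintype.card V := by
    rintro q ⟨F, hmf⟩
    have hinj : Function.Injective (fun t : Fin (q+1) => F t) := by
      intro a b hab
      have := hmf.2.2.1 a (by omega) b (by omega) hab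
      exact Fin.ext this
    have := Fintype.card_le_of_injective _ hinj
    simp at this
    omega
  set p := Nat.findGreatest P (Fintype.card V) with hpdef
  have hp : P p := Nat.findGreatest_spec (Nat.zero_le _) h0
  have hmaxp : ∀ q, P q → q ≤ p := by
    intro q hq
    by_contra hqp
    exact Nat.findGreatest_is_greatest (by omega) (le_of_lt (hbound q hq)) hq
  obtain ⟨F, hmf⟩ := hp
  -- every color missing at a fan vertex is the color of a fan edge
  have hcol : ∀ cc s, s ≤ p → Miss φ (F s) cc →
      ∃ t, 1 ≤ t ∧ t ≤ p ∧ φ.c x (F t) = some cc := by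
    intro cc s hsp hm
    have hnm : ¬ Miss φ x cc := fun h => lemA hnc hxy s φ F p hmf hsp cc h hm
    obtain ⟨v, hv⟩ := not_miss_iff.mp hnm
    by_cases hvF : ∃ t, t ≤ p ∧ F t = v
    · obtain ⟨t, htp, htv⟩ := hvF
      have ht0 : t ≠ 0 := by
        intro h
        rw [h, hmf.1] at htv
        rw [← htv] at hv
        rw [φ.uncol] at hv
        cases hv
      exact ⟨t, by omega, htp, by rw [htv]; exact hv⟩
    · exfalso
      push_neg at hvF
      set F' : ℕ → V := fun n => if n = p + 1 then v else F n with hF'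
      have hF'le : ∀ t, t ≤ p → F' t = F t := by
        intro t ht
        simp only [hF']
        rw [if_neg (by omega)]
      have hmf' : IsMF φ F' (p + 1) := by
        refine ⟨by rw [hF'le 0 (by omega)]; exact hmf.1, ?_, ?_, ?_⟩
        · intro t ht
          rcases Nat.lt_or_ge t (p+1) with h | h
          · rw [hF'le t (by omega)]; exact hmf.2.1 t (by omega)
          · have : t = p + 1 := by omega
            simp only [hF', this, if_pos rfl]
            exact φ.adj x v cc hv
        · intro s' hs' t ht hst
          rcases Nat.lt_or_ge s' (p+1) with h1 | h1 <;> rcases Nat.lt_or_ge t (p+1) with h2 | h2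
          · rw [hF'le s' (by omega), hF'le t (by omega)] at hst
            exact hmf.2.2.1 s' (by omega) t (by omega) hst
          · have ht' : t = p + 1 := by omega
            rw [hF'le s' (by omega)] at hst
            simp only [hF', ht', if_pos rfl] at hst
            exact absurd hst (hvF s' (by omega))
          · have hs'' : s' = p + 1 := by omega
            rw [hF'le t (by omega)] at hst
            simp only [hF', hs'', if_pos rfl] at hst
            exact absurd hst.symm (hvF t (by omega))
          · omega
        · intro t h1t ht
          rcases Nat.lt_or_ge t (p+1) with h | h
          · obtain ⟨s', hs', cc', hcc', hmiss'⟩ := hmf.2.2.2 t h1t (by omega)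
            refine ⟨s', hs', cc', ?_, ?_⟩
            · rw [hF'le t (by omega)]; exact hcc'
            · rw [hF'le s' (by omega)]; exact hmiss'
          · have ht' : t = p + 1 := by omega
            refine ⟨s, by omega, cc, ?_, ?_⟩
            · simp only [hF', ht', if_pos rfl]; exact hv
            · rw [hF'le s (by omega)]; exact hm
      have := hmaxp (p+1) ⟨F', hmf'⟩
      omega
  set U : Finset (Fin Δ) := Finset.univ.filter (fun cc => ∃ s, s ≤ p ∧ Miss φ (F s) cc) with hU
  have hUp : U.card ≤ p := by
    set g : Fin Δ → ℕ := fun cc =>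
      if h : ∃ t, 1 ≤ t ∧ t ≤ p ∧ φ.c x (F t) = some cc then Classical.choose h else 0 with hg
    have hspec : ∀ cc ∈ U, 1 ≤ g cc ∧ g cc ≤ p ∧ φ.c x (F (g cc)) = some cc := by
      intro cc hcc
      rw [hU, Finset.mem_filter] at hcc
      obtain ⟨s, hsp, hm⟩ := hcc.2
      have h := hcol cc s hsp hm
      rw [hg]
      simp only [dif_pos h]
      exact Classical.choose_spec h
    have : U.card ≤ (Finset.Icc 1 p).card := by
      apply Finset.card_le_card_of_injOn g
      · intro cc hcc
        obtain ⟨h1, h2, _⟩ := hspec cc hcc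
        rw [Finset.mem_coe, Finset.mem_Icc]
        exact ⟨h1, h2⟩
      · intro cc hcc cc' hcc' he
        obtain ⟨_, _, h3⟩ := hspec cc hcc
        obtain ⟨_, _, h3'⟩ := hspec cc' hcc'
        rw [he] at h3
        exact Option.some_inj.mp (h3.symm.trans h3')
    rwa [Nat.card_Icc, Nat.add_sub_cancel] at this
  have hU0 : MissF φ y ⊆ U := by
    intro cc hcc
    rw [hU, Finset.mem_filter]
    refine ⟨Finset.mem_univ _, 0, Nat.zero_le _, ?_⟩
    rw [hmf.1]
    exact mem_missF.mp hcc
  set D : Finset ℕ := (Finset.Icc 1 p).filter (fun s => (G.neighborFinset (F s)).card < Δ)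
    with hD
  set rep : ℕ → Fin Δ := fun s =>
    if h : (MissF φ (F s)).Nonempty then h.choose else ⟨0, hΔ⟩ with hrep
  have hrepmem : ∀ s ∈ D, Miss φ (F s) (rep s) := by
    intro s hs
    rw [hD, Finset.mem_filter] at hs
    have hne : (MissF φ (F s)).Nonempty := by
      apply Finset.card_pos.mp
      have := missF_card φ (F s)
      omega
    rw [hrep]
    simp only [dif_pos hne]
    exact mem_missF.mp hne.choose_spec
  have hDIcc : ∀ s ∈ D, 1 ≤ s ∧ s ≤ p := by
    intro s hs
    rw [hD, Finset.mem_filter, Finset.mem_Icc] at hs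
    exact hs.1
  have hDU : D.image rep ⊆ U := by
    intro cc hcc
    rw [Finset.mem_image] at hcc
    obtain ⟨s, hs, rfl⟩ := hcc
    rw [hU, Finset.mem_filter]
    exact ⟨Finset.mem_univ _, s, (hDIcc s hs).2, hrepmem s hs⟩
  have hdisj : Disjoint (MissF φ y) (D.image rep) := by
    rw [Finset.disjoint_left]
    intro cc h1 h2
    rw [Finset.mem_image] at h2
    obtain ⟨s, hs, hrs⟩ := h2
    refine lemB hnc hxy (hmax x) φ F p hmf 0 (Nat.zero_le _) s (hDIcc s hs).2 ?_ cc ?_ ?_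
    · have := (hDIcc s hs).1; omega
    · rw [hmf.1]; exact mem_missF.mp h1
    · rw [← hrs] at *; exact hrepmem s hs
  have hrinj : Set.InjOn rep D := by
    intro s hs s' hs' he
    by_contra hne
    exact lemB hnc hxy (hmax x) φ F p hmf s (hDIcc s hs).2 s' (hDIcc s' hs').2 hne
      (rep s) (hrepmem s hs) (by rw [he]; exact hrepmem s' hs')
  have hUlow : (MissF φ y).card + D.card ≤ U.card := by
    have h1 : (MissF φ y ∪ D.image rep) ⊆ U := Finset.union_subset hU0 hDU
    have h2 := Finset.card_le_card h1
    rw [Finset.card_union_of_disjoint hdisj, Finset.card_image_of_injOn hrinj] at h2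
    exact h2
  have hy : Δ + 1 ≤ (G.neighborFinset y).card + (MissF φ y).card := by
    apply missF_card_end φ hxy.symm
    rw [φ.symm y x]
    exact φ.uncol
  set Z := Finset.univ.filter (fun z => G.Adj x z ∧ z ≠ y ∧ (G.neighborFinset z).card = Δ)
    with hZdef
  have hZ : (Finset.Icc 1 p \ D).card ≤ Z.card := by
    apply Finset.card_le_card_of_injOn F
    · intro s hs
      rw [Finset.mem_coe, Finset.mem_sdiff, Finset.mem_Icc] at hs
      obtain ⟨⟨h1, h2⟩, h3⟩ := hs
      rw [Finset.mem_coe, hZdef, Finset.mem_filter]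
      refine ⟨Finset.mem_univ _, hmf.2.1 s h2, ?_, ?_⟩
      · intro h
        rw [← hmf.1] at h
        have := hmf.2.2.1 s h2 0 (Nat.zero_le _) h
        omega
      · have : ¬ (G.neighborFinset (F s)).card < Δ := by
          intro hlt
          exact h3 (by rw [hD, Finset.mem_filter, Finset.mem_Icc]; exact ⟨⟨h1, h2⟩, hlt⟩)
        have := hmax (F s)
        omega
    · intro s hs s' hs' he
      rw [Finset.mem_coe, Finset.mem_sdiff, Finset.mem_Icc] at hs hs'
      exact hmf.2.2.1 s hs.1.2 s' hs'.1.2 he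
  have hDsub : D ⊆ Finset.Icc 1 p := Finset.filter_subset _ _
  have hDcard : D.card ≤ p := by
    have := Finset.card_le_card hDsub
    rwa [Nat.card_Icc, Nat.add_sub_cancel] at this
  have hsd : (Finset.Icc 1 p \ D).card = p - D.card := by
    rw [Finset.card_sdiff_of_subset hDsub, Nat.card_Icc, Nat.add_sub_cancel]
  omega
lemma ndeg_eq [DecidableRel G.Adj] (v : V) : ndeg G v = (G.neighborFinset v).card := by
  rw [ndeg, Set.ncard_eq_toFinset_card']
  congr 1

/-- The key consequence of VAL: a vertex `x` with a neighbor `y ∈ T` has at most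
`deg y` neighbors in `T`. -/
lemma star [DecidableRel G.Adj] (hnc : ¬ HasEdgeColoring G Δ)
    (hdel : ∀ e ∈ G.edgeSet, chromIdx (G.deleteEdges {e}) = Δ)
    (hmax : ∀ v, (G.neighborFinset v).card ≤ Δ)
    {T : Set V} (hδ0 : {y ∈ T | ndeg G y = Δ}.ncard ≤ 1)
    {x y : V} (hadj : G.Adj x y) (hyT : y ∈ T) :
    ((G.neighborFinset x).filter (fun u => u ∈ T)).card ≤ (G.neighborFinset y).card := by
  classical
  have hsubdeg : ((G.neighborFinset x).filter (fun u => u ∈ T)).card ≤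
      (G.neighborFinset x).card := Finset.card_le_card (Finset.filter_subset _ _)
  by_cases hyΔ : (G.neighborFinset y).card = Δ
  · rw [hyΔ]
    exact le_trans hsubdeg (hmax x)
  · have hde : HasEdgeColoring (G.deleteEdges {s(x,y)}) Δ :=
      hec_of_chromIdx _ (hdel s(x,y) ((SimpleGraph.mem_edgeSet G).mpr hadj))
    have hval := VAL hnc hde hmax hadj
    set Z := Finset.univ.filter (fun z => G.Adj x z ∧ z ≠ y ∧ (G.neighborFinset z).card = Δ)
      with hZdef
    set ZT := Z.filter (fun z => z ∈ T) with hZT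
    have hZT1 : ZT.card ≤ 1 := by
      rw [Finset.card_le_one]
      intro a ha b hb
      rw [hZT, Finset.mem_filter, hZdef, Finset.mem_filter] at ha hb
      have hsing := (Set.ncard_le_one (Set.toFinite _)).mp hδ0
      exact hsing a ⟨ha.2, by rw [ndeg_eq]; exact ha.1.2.2.2⟩
        b ⟨hb.2, by rw [ndeg_eq]; exact hb.1.2.2.2⟩
    have hZTsub : ZT ⊆ Z := Finset.filter_subset _ _
    set B := (G.neighborFinset x).filter (fun u => u ∉ T) with hBdef
    have hZB : Z \ ZT ⊆ B := by
      intro z hz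
      rw [Finset.mem_sdiff] at hz
      have hzZ := hz.1
      rw [hZdef, Finset.mem_filter] at hzZ
      rw [hBdef, Finset.mem_filter]
      refine ⟨(SimpleGraph.mem_neighborFinset _ _ _).mpr hzZ.2.1, ?_⟩
      intro hzT
      apply hz.2
      rw [hZT, Finset.mem_filter]
      exact ⟨hz.1, hzT⟩
    have hZBcard : Z.card - ZT.card ≤ B.card := by
      rw [← Finset.card_sdiff_of_subset hZTsub]
      exact Finset.card_le_card hZB
    have hAB : ((G.neighborFinset x).filter (fun u => u ∈ T)).card + B.card =
        (G.neighborFinset x).card := by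
      rw [hBdef]
      exact Finset.card_filter_add_card_filter_not _
    have hdx := hmax x
    have hZTle : ZT.card ≤ Z.card := Finset.card_le_card hZTsub
    omega

variable (G) in
theorem vizing_stmt_4' [Fintype V] (Δ : ℕ)
    (hcrit : IsDeltaCritical G Δ) (T : Set V) (hT : IsIndep G T)
    (hδ0 : {y ∈ T | ndeg G y = Δ}.ncard ≤ 1) :
    HasMatchingSaturating (betweenGraph G T) T := by
  classical
  obtain ⟨hnoiso, ⟨hub, _⟩, hchrom, hdel⟩ := hcrit
  have hnc : ¬ HasEdgeColoring G Δ := not_hec hchrom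
  have hmax : ∀ v, (G.neighborFinset v).card ≤ Δ := fun v => by
    rw [← ndeg_eq]; exact hub v
  set t : ↥T → Finset V := fun yy => G.neighborFinset ↑yy with ht
  have hdegpos : ∀ yy : ↥T, 0 < (t yy).card := by
    intro yy
    obtain ⟨u, hu⟩ := hnoiso ↑yy
    exact Finset.card_pos.mpr ⟨u, (SimpleGraph.mem_neighborFinset _ _ _).mpr hu⟩
  have hall : ∀ (A : Finset ↥T), A.card ≤ (A.biUnion t).card := by
    intro A
    set B := A.biUnion t with hB
    have key : (A.card : ℚ) ≤ B.card := by
      have h1 : (A.card : ℚ) = ∑ yy ∈ A, ∑ _xx ∈ t yy, ((t yy).card : ℚ)⁻¹ := by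
        rw [eq_comm]
        calc ∑ yy ∈ A, ∑ _xx ∈ t yy, ((t yy).card : ℚ)⁻¹
            = ∑ _yy ∈ A, (1 : ℚ) := by
              apply Finset.sum_congr rfl
              intro yy _
              rw [Finset.sum_const, nsmul_eq_mul, mul_inv_cancel₀]
              exact_mod_cast (hdegpos yy).ne'
          _ = A.card := by rw [Finset.sum_const, nsmul_eq_mul, mul_one]
      have hsubB : ∀ yy ∈ A, B.filter (fun xx => xx ∈ t yy) = t yy := by
        intro yy hy
        ext xx
        simp only [Finset.mem_filter]
        exact ⟨fun h => h.2, fun h => ⟨Finset.mem_biUnion.mpr ⟨yy, hy, h⟩, h⟩⟩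
      have h2 : ∑ yy ∈ A, ∑ _xx ∈ t yy, ((t yy).card : ℚ)⁻¹
          = ∑ xx ∈ B, ∑ yy ∈ A.filter (fun yy => xx ∈ t yy), ((t yy).card : ℚ)⁻¹ := by
        calc ∑ yy ∈ A, ∑ _xx ∈ t yy, ((t yy).card : ℚ)⁻¹
            = ∑ yy ∈ A, ∑ xx ∈ B, if xx ∈ t yy then ((t yy).card : ℚ)⁻¹ else 0 := by
              apply Finset.sum_congr rfl
              intro yy hy
              rw [← Finset.sum_filter, hsubB yy hy]
          _ = ∑ xx ∈ B, ∑ yy ∈ A, if xx ∈ t yy then ((t yy).card : ℚ)⁻¹ else 0 :=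
              Finset.sum_comm
          _ = _ := by
              apply Finset.sum_congr rfl
              intro xx _
              rw [Finset.sum_filter]
      have h3 : ∀ xx ∈ B, ∑ yy ∈ A.filter (fun yy => xx ∈ t yy), ((t yy).card : ℚ)⁻¹ ≤ 1 := by
        intro xx hx
        obtain ⟨yy0, hyy0A, hyy0⟩ := Finset.mem_biUnion.mp hx
        set dT := ((G.neighborFinset xx).filter (fun u => u ∈ T)).card with hdT
        have hxxT : xx ∉ T := by
          intro hxxT
          have hadj : G.Adj ↑yy0 xx := (SimpleGraph.mem_neighborFinset _ _ _).mp hyy0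
          exact hT ↑yy0 yy0.2 xx hxxT hadj
        have hdTpos : 0 < dT := by
          refine Finset.card_pos.mpr ⟨(yy0 : V), ?_⟩
          rw [Finset.mem_filter]
          have hadj : G.Adj ↑yy0 xx := (SimpleGraph.mem_neighborFinset _ _ _).mp hyy0
          exact ⟨(SimpleGraph.mem_neighborFinset _ _ _).mpr hadj.symm, yy0.2⟩
        have hterm : ∀ yy ∈ A.filter (fun yy => xx ∈ t yy),
            ((t yy).card : ℚ)⁻¹ ≤ (dT : ℚ)⁻¹ := by
          intro yy hyy
          rw [Finset.mem_filter] at hyy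
          have hadj : G.Adj xx ↑yy := ((SimpleGraph.mem_neighborFinset _ _ _).mp hyy.2).symm
          have hs := star hnc hdel hmax hδ0 hadj yy.2
          apply inv_anti₀ (by exact_mod_cast hdTpos) (by exact_mod_cast hs)
        have hcardAx : (A.filter (fun yy => xx ∈ t yy)).card ≤ dT := by
          rw [hdT]
          apply Finset.card_le_card_of_injOn (fun (yy : ↥T) => (yy : V))
          · intro yy hyy
            rw [Finset.mem_coe, Finset.mem_filter] at hyy
            rw [Finset.mem_coe, Finset.mem_filter]
            exact ⟨(SimpleGraph.mem_neighborFinset _ _ _).mpr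
              (((SimpleGraph.mem_neighborFinset _ _ _).mp hyy.2).symm), yy.2⟩
          · intro a _ b _ h
            exact Subtype.ext h
        calc ∑ yy ∈ A.filter (fun yy => xx ∈ t yy), ((t yy).card : ℚ)⁻¹
            ≤ ∑ _yy ∈ A.filter (fun yy => xx ∈ t yy), (dT : ℚ)⁻¹ := Finset.sum_le_sum hterm
          _ = (A.filter (fun yy => xx ∈ t yy)).card * (dT : ℚ)⁻¹ := by
              rw [Finset.sum_const, nsmul_eq_mul]
          _ ≤ (dT : ℚ) * (dT : ℚ)⁻¹ := by
              apply mul_le_mul_of_nonneg_right _ (by positivity)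
              exact_mod_cast hcardAx
          _ = 1 := mul_inv_cancel₀ (by exact_mod_cast hdTpos.ne')
      calc (A.card : ℚ) = _ := h1
        _ = _ := h2
        _ ≤ ∑ _xx ∈ B, (1 : ℚ) := Finset.sum_le_sum h3
        _ = B.card := by rw [Finset.sum_const, nsmul_eq_mul, mul_one]
    exact_mod_cast key
  obtain ⟨f, hfinj, hfmem⟩ := (Finset.all_card_le_biUnion_card_iff_exists_injective t).mp hall
  have hfadj : ∀ yy : ↥T, G.Adj ↑yy (f yy) := by
    intro yy
    exact (SimpleGraph.mem_neighborFinset _ _ _).mp (hfmem yy)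
  have hfT : ∀ yy : ↥T, f yy ∉ T := by
    intro yy hfT
    exact hT ↑yy yy.2 (f yy) hfT (hfadj yy)
  refine ⟨⟨T ∪ Set.range (fun yy => f yy),
    fun u v => ∃ yy : ↥T, (u = ↑yy ∧ v = f yy) ∨ (u = f yy ∧ v = ↑yy), ?_, ?_, ?_⟩, ?_, ?_⟩
  · rintro u v ⟨yy, ⟨rfl, rfl⟩ | ⟨rfl, rfl⟩⟩
    · exact ⟨hfadj yy, Or.inr ⟨yy.2, hfT yy⟩⟩
    · exact ⟨(hfadj yy).symm, Or.inl ⟨hfT yy, yy.2⟩⟩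
  · rintro u v ⟨yy, ⟨rfl, rfl⟩ | ⟨rfl, rfl⟩⟩
    · exact Or.inl yy.2
    · exact Or.inr ⟨yy, rfl⟩
  · refine ⟨?_⟩; rintro u v ⟨yy, ⟨rfl, rfl⟩ | ⟨rfl, rfl⟩⟩
    · exact ⟨yy, Or.inr ⟨rfl, rfl⟩⟩
    · exact ⟨yy, Or.inl ⟨rfl, rfl⟩⟩
  · intro v hv
    by_cases hvT : v ∈ T
    · refine ⟨f ⟨v, hvT⟩, ⟨⟨v, hvT⟩, Or.inl ⟨rfl, rfl⟩⟩, ?_⟩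
      rintro w ⟨yy, ⟨hy1, hy2⟩ | ⟨hy1, hy2⟩⟩
      · have : yy = ⟨v, hvT⟩ := Subtype.ext hy1.symm
        rw [hy2, this]
      · rw [hy1] at hvT
        exact absurd hvT (hfT yy)
    · rcases hv with hv | ⟨yy0, hyy0⟩
      · exact absurd hv hvT
      · simp only at hyy0
        refine ⟨↑yy0, ⟨yy0, Or.inr ⟨hyy0.symm, rfl⟩⟩, ?_⟩
        rintro w ⟨yy, ⟨hy1, hy2⟩ | ⟨hy1, hy2⟩⟩
        · rw [hy1] at hvT
          exact absurd (yy.2) hvT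
        · rw [← hyy0] at hy1
          have : yy = yy0 := hfinj (hy1.symm)
          rw [hy2, this]
  · exact fun v hv => Or.inl hv
end Aux

theorem vizing_stmt_4 [Fintype V] (G : SimpleGraph V) (Δ : ℕ)
    (hcrit : IsDeltaCritical G Δ) (T : Set V) (hT : IsIndep G T)
    (hδ0 : {y ∈ T | ndeg G y = Δ}.ncard ≤ 1) :
    HasMatchingSaturating (betweenGraph G T) T :=
  vizing_stmt_4' G Δ hcrit T hT hδ0

end VizingTwoFactor
end
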